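/- Let W₁ and W₂ be groups of the form W_i = (D_∞ × D_∞) and suppose for i = 1,2 there are nonnegative integers m_i, n_i (numbers of neighbor classes attaching along D_∞- and D_∞ × ℤ/2-edges). If there is a quasi-isometry between the associated decorated spaces (L ∪ E₁) and (L ∪ E₂) — two copies of the integer line L with respectively 2m₁+n₁ and 2m₂+n₂ tangling edges at each vertex — that is bijective on tangling edges and fixes 0, ±∞, then this quasi-isometry restricted to L is at bounded distance from multiplication by (2m₁+n₁)/(2m₂+n₂). -/

import Mathlib

/-- Discrete intermediate value: a map crossing level `t` on `[y,z]` crosses at some point. -/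
private lemma ivt_aux (f : ℤ → ℤ) (t : ℤ) : ∀ n : ℕ, ∀ y z : ℤ, z - y ≤ n → y ≤ z →
    f y < t → t ≤ f z → ∃ w, y ≤ w ∧ w < z ∧ f w < t ∧ t ≤ f (w + 1) := by
  intro n
  induction n with
  | zero =>
    intro y z hn hyz h1 h2
    have hz : z = y := by omega
    subst hz
    omega
  | succ n ih =>
    intro y z hn hyz h1 h2
    have hlt : y < z := by
      rcases eq_or_lt_of_le hyz with h | h
      · subst h; omega
      · exact h
    by_cases h' : t ≤ f (y + 1)
    · exact ⟨y, le_refl y, hlt, h1, h'⟩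
    · obtain ⟨w, hw1, hw2, hw3, hw4⟩ := ih (y + 1) z (by omega) (by omega) (by omega) h2
      exact ⟨w, by omega, hw2, hw3, hw4⟩

/-- A bijective quasi-isometry of ℤ fixing `0`, `+∞`, `-∞` is bounded distance from the
identity on the nonnegative integers. -/
private lemma key_aux (f : ℤ → ℤ) (C D : ℝ) (hC : 1 ≤ C) (hD : 0 ≤ D)
    (hbij : Function.Bijective f)
    (hQI : ∀ x y : ℤ, (1/C) * |(x : ℝ) - (y : ℝ)| - D ≤ |(f x : ℝ) - (f y : ℝ)| ∧
      |(f x : ℝ) - (f y : ℝ)| ≤ C * |(x : ℝ) - (y : ℝ)| + D)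
    (h0 : f 0 = 0)
    (htop : Filter.Tendsto f Filter.atTop Filter.atTop)
    (hbot : Filter.Tendsto f Filter.atBot Filter.atBot) :
    ∃ B : ℝ, 0 ≤ B ∧ ∀ x : ℤ, 0 ≤ x → |(f x : ℝ) - x| ≤ B := by
  have hC0 : (0:ℝ) < C := lt_of_lt_of_le one_pos hC
  -- step bound
  have hstep : ∀ w : ℤ, (f (w+1) : ℝ) - f w ≤ C + D := by
    intro w
    have h := (hQI (w+1) w).2
    have h1 : |((w:ℝ)+1) - w| = 1 := by rw [show ((w:ℝ)+1) - w = 1 by ring, abs_one]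
    have h2 : (f (w+1) : ℝ) - f w ≤ |(f (w+1) : ℝ) - f w| := le_abs_self _
    push_cast at h ⊢
    rw [h1] at h
    linarith
  -- the coarse-monotonicity constant
  set K : ℝ := C^2*(C+2*D) + C + 2*D with hKdef
  have hK0 : 0 ≤ K := by positivity
  set Kz : ℤ := ⌈K⌉ with hKzdef
  have hKKz : K ≤ (Kz : ℝ) := Int.le_ceil K
  have hKz0 : (0:ℤ) ≤ Kz := by
    have : (0:ℝ) ≤ (Kz:ℝ) := le_trans hK0 hKKz
    exact_mod_cast this
  -- coarse monotonicity
  have CM : ∀ x y : ℤ, x ≤ y → (f x : ℝ) ≤ (f y : ℝ) + K := by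
    intro x y hxy
    by_cases hfy : f x ≤ f y
    · have : (f x : ℝ) ≤ f y := by exact_mod_cast hfy
      linarith
    · push_neg at hfy
      obtain ⟨N, hN⟩ := Filter.eventually_atTop.mp (htop.eventually (Filter.eventually_ge_atTop (f x)))
      set z : ℤ := max y N with hz
      have hyz : y ≤ z := le_max_left _ _
      have hfz : f x ≤ f z := hN z (le_max_right _ _)
      obtain ⟨w, hw1, hw2, hw3, hw4⟩ := ivt_aux f (f x) (z - y).toNat y z (by omega) hyz hfy (by omega)
      -- real versions
      have hfw : (f x : ℝ) - f w ≤ C + D := by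
        have h1 : (f x : ℝ) ≤ f (w+1) := by exact_mod_cast hw4
        have := hstep w
        linarith
      have hfwpos : (0:ℝ) < (f x : ℝ) - f w := by
        have : (f w : ℝ) < f x := by exact_mod_cast hw3
        linarith
      -- lower QI between w and x
      have hwx : |(w:ℝ) - x| ≤ C*(C+2*D) := by
        have h := (hQI w x).1
        have habs : |(f w : ℝ) - f x| = (f x : ℝ) - f w := by
          rw [abs_sub_comm]; exact abs_of_pos hfwpos
        rw [habs] at h
        have h2 : (1/C) * |(w:ℝ) - x| ≤ C + 2*D := by linarith
        calc |(w:ℝ) - x| = C * ((1/C) * |(w:ℝ) - x|) := by field_simp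
          _ ≤ C * (C + 2*D) := by
            apply mul_le_mul_of_nonneg_left h2 (le_of_lt hC0)
      have hwy : (0:ℝ) ≤ (w:ℝ) - y ∧ (w:ℝ) - y ≤ C*(C+2*D) := by
        constructor
        · have : (y:ℝ) ≤ w := by exact_mod_cast hw1
          linarith
        · have hxw : (x:ℝ) ≤ w := by exact_mod_cast le_trans hxy hw1
          have hxy' : (x:ℝ) ≤ y := by exact_mod_cast hxy
          have : (w:ℝ) - x ≤ C*(C+2*D) := le_trans (le_abs_self _) hwx
          linarith
      have h3 := (hQI w y).2
      have h4 : (f w : ℝ) - f y ≤ |(f w : ℝ) - f y| := le_abs_self _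
      have h5 : |(w:ℝ) - y| = (w:ℝ) - y := abs_of_nonneg hwy.1
      rw [h5] at h3
      have h6 : (f w : ℝ) - f y ≤ C*(C*(C+2*D)) + D := by
        have := mul_le_mul_of_nonneg_left hwy.2 (le_of_lt hC0)
        linarith
      have : (f x : ℝ) ≤ f y + (C*(C*(C+2*D)) + D + (C + D)) := by linarith
      rw [hKdef]
      nlinarith [this]
  have CMz : ∀ x y : ℤ, x ≤ y → f x ≤ f y + Kz := by
    intro x y hxy
    have h := CM x y hxy
    have : (f x : ℝ) ≤ (f y : ℝ) + (Kz : ℝ) := le_trans h (by linarith)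
    exact_mod_cast this
  -- thresholds for the ends
  obtain ⟨N₀', hN₀'⟩ := Filter.eventually_atBot.mp (hbot.eventually (Filter.eventually_le_atBot (-1)))
  set N₀ : ℤ := min N₀' (-1) with hN₀def
  have hN₀ : ∀ w : ℤ, w ≤ N₀ → f w ≤ -1 := fun w hw => hN₀' w (le_trans hw (min_le_left _ _))
  have hN₀1 : N₀ ≤ -1 := min_le_right _ _
  obtain ⟨N₁', hN₁'⟩ := Filter.eventually_atTop.mp (htop.eventually (Filter.eventually_ge_atTop 1))
  set N₁ : ℤ := max N₁' 1 with hN₁def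
  have hN₁ : ∀ w : ℤ, N₁ ≤ w → 1 ≤ f w := fun w hw => hN₁' w (le_trans (le_max_left _ _) hw)
  have hN₁1 : 1 ≤ N₁ := le_max_right _ _
  set e : ℤ ≃ ℤ := Equiv.ofBijective f hbij with hedef
  have hfe : ∀ t : ℤ, f (e.symm t) = t := fun t => e.apply_symm_apply t
  -- upper bound
  have hup : ∀ x : ℤ, 0 ≤ x → f x ≤ x + (Kz - N₀) := by
    intro x hx
    by_cases h : f x ≤ Kz
    · omega
    · push_neg at h
      have hcard := Finset.card_le_card_of_injOn (fun t => e.symm t)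
        (s := Finset.Icc 0 (f x - Kz - 1)) (t := Finset.Icc (N₀+1) (x-1))
        (by
          intro t ht
          rw [Finset.mem_coe, Finset.mem_Icc] at ht ⊢
          constructor
          · by_contra hcon
            push_neg at hcon
            have := hN₀ (e.symm t) (by omega)
            rw [hfe t] at this
            omega
          · by_contra hcon
            push_neg at hcon
            have := CMz x (e.symm t) (by omega)
            rw [hfe t] at this
            omega)
        (fun a _ b _ hab => e.symm.injective hab)
      rw [Int.card_Icc, Int.card_Icc] at hcard
      omega
  -- bound for small nonneg x
  set Pz : ℤ := ⌈C*(N₁:ℝ) + D⌉ with hPzdef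
  have hPz0 : 0 ≤ Pz := by
    have h1 : (0:ℝ) ≤ C*(N₁:ℝ) + D := by
      have : (1:ℝ) ≤ (N₁:ℝ) := by exact_mod_cast hN₁1
      nlinarith
    have : (0:ℝ) ≤ (Pz:ℝ) := le_trans h1 (Int.le_ceil _)
    exact_mod_cast this
  -- lower bound
  have hlo : ∀ x : ℤ, 0 ≤ x → x - (Kz + N₁ + Pz) ≤ f x := by
    intro x hx
    by_cases h : x < N₁
    · -- small case: |f x| ≤ C x + D
      have hq := (hQI x 0).2
      rw [h0] at hq
      push_cast at hq
      have h1 : |(x:ℝ)| = x := abs_of_nonneg (by exact_mod_cast hx)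
      rw [sub_zero, sub_zero, h1] at hq
      have h2 : -(f x : ℝ) ≤ |(f x : ℝ)| := neg_le_abs _
      have h3 : (x:ℝ) ≤ N₁ := by exact_mod_cast le_of_lt h
      have h4 : ((-Pz : ℤ) : ℝ) ≤ (f x : ℝ) := by
        push_cast
        have h5 := Int.le_ceil (C*(N₁:ℝ) + D)
        have h6 : C * (x:ℝ) ≤ C * (N₁:ℝ) := mul_le_mul_of_nonneg_left h3 (le_of_lt hC0)
        linarith
      have h7 : -Pz ≤ f x := by exact_mod_cast h4
      omega
    · push_neg at h
      have hcard := Finset.card_le_card_of_injOn f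
        (s := Finset.Icc N₁ x) (t := Finset.Icc 1 (f x + Kz))
        (by
          intro w hw
          rw [Finset.mem_coe, Finset.mem_Icc] at hw ⊢
          exact ⟨hN₁ w hw.1, CMz w x hw.2⟩)
        (fun a _ b _ hab => hbij.injective hab)
      rw [Int.card_Icc, Int.card_Icc] at hcard
      omega
  -- combine
  refine ⟨((Kz - N₀) + (Kz + N₁ + Pz) : ℤ), ?_, ?_⟩
  · have : (0:ℤ) ≤ (Kz - N₀) + (Kz + N₁ + Pz) := by omega
    exact_mod_cast this
  · intro x hx
    have h1 := hup x hx
    have h2 := hlo x hx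
    have h3 : |f x - x| ≤ (Kz - N₀) + (Kz + N₁ + Pz) := by
      rw [abs_le]; omega
    calc |(f x : ℝ) - x| = ((|f x - x| : ℤ) : ℝ) := by push_cast; ring
      _ ≤ _ := by exact_mod_cast h3

/-- Bounded distance from the identity on all of ℤ. -/
private lemma key_all (f : ℤ → ℤ) (C D : ℝ) (hC : 1 ≤ C) (hD : 0 ≤ D)
    (hbij : Function.Bijective f)
    (hQI : ∀ x y : ℤ, (1/C) * |(x : ℝ) - (y : ℝ)| - D ≤ |(f x : ℝ) - (f y : ℝ)| ∧
      |(f x : ℝ) - (f y : ℝ)| ≤ C * |(x : ℝ) - (y : ℝ)| + D)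
    (h0 : f 0 = 0)
    (htop : Filter.Tendsto f Filter.atTop Filter.atTop)
    (hbot : Filter.Tendsto f Filter.atBot Filter.atBot) :
    ∃ B : ℝ, 0 ≤ B ∧ ∀ x : ℤ, |(f x : ℝ) - x| ≤ B := by
  obtain ⟨B₁, hB₁0, hB₁⟩ := key_aux f C D hC hD hbij hQI h0 htop hbot
  set g : ℤ → ℤ := fun x => -f (-x) with hg
  have gbij : Function.Bijective g :=
    ((Equiv.neg ℤ).trans ((Equiv.ofBijective f hbij).trans (Equiv.neg ℤ))).bijective
  have gQI : ∀ x y : ℤ, (1/C) * |(x : ℝ) - (y : ℝ)| - D ≤ |(g x : ℝ) - (g y : ℝ)| ∧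
      |(g x : ℝ) - (g y : ℝ)| ≤ C * |(x : ℝ) - (y : ℝ)| + D := by
    intro x y
    have h := hQI (-x) (-y)
    have e1 : |((g x : ℤ) : ℝ) - ((g y : ℤ) : ℝ)| = |(f (-x) : ℝ) - (f (-y) : ℝ)| := by
      simp only [hg]
      push_cast
      rw [show -(f (-x):ℝ) - -(f (-y):ℝ) = -((f (-x):ℝ) - (f (-y):ℝ)) by ring, abs_neg]
    have e2 : |(x:ℝ) - y| = |((-x : ℤ):ℝ) - ((-y:ℤ):ℝ)| := by
      push_cast
      rw [show (-(x:ℝ)) - (-(y:ℝ)) = -((x:ℝ) - y) by ring, abs_neg]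
    rw [e1, e2]; exact h
  have g0 : g 0 = 0 := by simp [hg, h0]
  have gtop : Filter.Tendsto g Filter.atTop Filter.atTop :=
    Filter.tendsto_neg_atBot_atTop.comp (hbot.comp Filter.tendsto_neg_atTop_atBot)
  have gbot : Filter.Tendsto g Filter.atBot Filter.atBot :=
    Filter.tendsto_neg_atTop_atBot.comp (htop.comp Filter.tendsto_neg_atBot_atTop)
  obtain ⟨B₂, hB₂0, hB₂⟩ := key_aux g C D hC hD gbij gQI g0 gtop gbot
  refine ⟨max B₁ B₂, le_trans hB₁0 (le_max_left _ _), fun x => ?_⟩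
  rcases le_or_gt 0 x with hx | hx
  · exact le_trans (hB₁ x hx) (le_max_left _ _)
  · have h := hB₂ (-x) (by omega)
    have e1 : |((g (-x) : ℤ) : ℝ) - ((-x : ℤ):ℝ)| = |(f x : ℝ) - x| := by
      simp only [hg, neg_neg]
      push_cast
      rw [show -(f x:ℝ) - -(x:ℝ) = -((f x:ℝ) - x) by ring, abs_neg]
    rw [e1] at h
    exact le_trans h (le_max_right _ _)

/-- A quasi-isometry between two copies of the line with 2m₁+n₁ resp. 2m₂+n₂ tangling
edges at each vertex, bijective on tangling edges and fixing 0 and ±∞, scales the line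
by (2m₁+n₁)/(2m₂+n₂) up to bounded distance. Via the block bijections
φᵢ : ℤ × Fin(2mᵢ+nᵢ) → ℤ such a map corresponds to a bijective quasi-isometry
f : ℤ → ℤ fixing 0 and ±∞; the induced map on the line sends z to
⌊f(φ₁(z,0))/(2m₂+n₂)⌋ and is bounded distance from multiplication by
(2m₁+n₁)/(2m₂+n₂). -/
theorem stmt_14 (m₁ n₁ m₂ n₂ : ℕ) (h₁ : 0 < 2*m₁ + n₁) (h₂ : 0 < 2*m₂ + n₂)
    (f : ℤ → ℤ) (C D : ℝ) (hC : 1 ≤ C) (hD : 0 ≤ D)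
    (hbij : Function.Bijective f)
    (hQI : ∀ x y : ℤ, (1/C) * |(x : ℝ) - (y : ℝ)| - D ≤ |(f x : ℝ) - (f y : ℝ)| ∧
      |(f x : ℝ) - (f y : ℝ)| ≤ C * |(x : ℝ) - (y : ℝ)| + D)
    (h0 : f 0 = 0)
    (htop : Filter.Tendsto f Filter.atTop Filter.atTop)
    (hbot : Filter.Tendsto f Filter.atBot Filter.atBot) :
    ∃ M : ℝ, 0 ≤ M ∧ ∀ z : ℤ,
      |(((f (if 0 ≤ z then z * (2*m₁ + n₁ : ℕ) else (z + 1) * (2*m₁ + n₁ : ℕ) - 1)).ediv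
          (2*m₂ + n₂ : ℕ) : ℤ) : ℝ)
        - ((2*m₁ + n₁ : ℝ)/(2*m₂ + n₂ : ℝ)) * (z : ℝ)| ≤ M := by
  obtain ⟨B, hB0, hB⟩ := key_all f C D hC hD hbij hQI h0 htop hbot
  set e₁ : ℤ := ((2*m₁ + n₁ : ℕ) : ℤ) with he₁
  set e₂ : ℤ := ((2*m₂ + n₂ : ℕ) : ℤ) with he₂
  have he₁0 : (0:ℤ) < e₁ := by rw [he₁]; exact_mod_cast h₁
  have he₂0 : (0:ℤ) < e₂ := by rw [he₂]; exact_mod_cast h₂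
  have he₁R : (0:ℝ) < ((e₁:ℤ):ℝ) := by exact_mod_cast he₁0
  have he₂R : (0:ℝ) < ((e₂:ℤ):ℝ) := by exact_mod_cast he₂0
  have he₂R1 : (1:ℝ) ≤ ((e₂:ℤ):ℝ) := by exact_mod_cast he₂0
  refine ⟨B + ((e₁:ℤ):ℝ) + ((e₂:ℤ):ℝ), by linarith, fun z => ?_⟩
  have hco : (2*(m₁:ℝ) + (n₁:ℝ))/(2*(m₂:ℝ) + (n₂:ℝ)) = ((e₁:ℤ):ℝ)/((e₂:ℤ):ℝ) := by
    rw [he₁, he₂]; push_cast; ring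
  rw [hco]
  set a : ℤ := if 0 ≤ z then z * e₁ else (z + 1) * e₁ - 1 with ha
  set q : ℤ := (f a).ediv e₂ with hqdef
  set r : ℤ := (f a) % e₂ with hrdef
  have hq : e₂ * q + r = f a := by
    rw [hqdef, hrdef, show (f a).ediv e₂ = f a / e₂ from rfl]
    exact Int.mul_ediv_add_emod _ _
  have hr0 : 0 ≤ r := Int.emod_nonneg _ (ne_of_gt he₂0)
  have hr1 : r < e₂ := Int.emod_lt_of_pos _ he₂0
  have hqR : ((e₂:ℤ):ℝ) * q + r = ((f a : ℤ):ℝ) := by exact_mod_cast hq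
  have haz : |a - e₁ * z| ≤ e₁ := by
    rw [ha]; split_ifs with h
    · rw [show z * e₁ - e₁ * z = 0 by ring, abs_zero]; omega
    · rw [show (z + 1) * e₁ - 1 - e₁ * z = e₁ - 1 by ring, abs_of_nonneg (by omega)]; omega
  have hazR : |(a:ℝ) - ((e₁:ℤ):ℝ) * z| ≤ ((e₁:ℤ):ℝ) := by
    exact_mod_cast haz
  have he₂ne : ((e₂:ℤ):ℝ) ≠ 0 := ne_of_gt he₂R
  have hkey : (((q:ℤ):ℝ) - (((e₁:ℤ):ℝ)/((e₂:ℤ):ℝ)) * z) * ((e₂:ℤ):ℝ)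
      = ((f a : ℤ):ℝ) - r - ((e₁:ℤ):ℝ) * z := by
    field_simp
    linear_combination hqR
  have habs : |((q:ℤ):ℝ) - (((e₁:ℤ):ℝ)/((e₂:ℤ):ℝ)) * z| * ((e₂:ℤ):ℝ)
      = |((f a : ℤ):ℝ) - r - ((e₁:ℤ):ℝ) * z| := by
    rw [← abs_of_pos he₂R, ← abs_mul, abs_of_pos he₂R, hkey]
  have t1 : |((f a : ℤ):ℝ) - a| ≤ B := hB a
  have t3 : |(r:ℝ)| ≤ ((e₂:ℤ):ℝ) := by
    rw [abs_of_nonneg (by exact_mod_cast hr0)]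
    exact_mod_cast le_of_lt hr1
  have hnum : |((f a : ℤ):ℝ) - r - ((e₁:ℤ):ℝ) * z| ≤ B + ((e₁:ℤ):ℝ) + ((e₂:ℤ):ℝ) := by
    rw [abs_le] at t1 t3 hazR ⊢
    constructor <;> linarith [t1.1, t1.2, t3.1, t3.2, hazR.1, hazR.2]
  have heq : |((q:ℤ):ℝ) - (((e₁:ℤ):ℝ)/((e₂:ℤ):ℝ)) * z|
      = |((f a : ℤ):ℝ) - r - ((e₁:ℤ):ℝ) * z| / ((e₂:ℤ):ℝ) := by
    rw [eq_div_iff he₂ne]; exact habs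
  rw [heq]
  exact le_trans (div_le_self (abs_nonneg _) he₂R1) hnum
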